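/- (Proposition 3, licensee part.) Assume f is differentiable on [0,1] with f'(t) ≤ 0 and R_L > f(t) for all t ∈ [0,1], g(y) ≥ 0, c_l > 0, and δ ∈ [0,1). Fix y ∈ [0,1]. Then every maximizer x* of the licensee's payoff x ↦ U_sl(x,y) = (1−δ)·[x(1−x)(R_L − f(1−x)) − x·y·g(y) − c_l·x] over [0,1] satisfies x* < 1/2; that is, the licensee's market share at any best response is strictly less than one half. -/

import Mathlib

open Set

/-- The feasible set of market shares: Ω = {(x,y) : x ≥ 0, y ≥ 0, x + y ≤ 1}. -/
def Omega : Set (ℝ × ℝ) := {p | 0 ≤ p.1 ∧ 0 ≤ p.2 ∧ p.1 + p.2 ≤ 1}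

/-- Leasing price as a function of market shares:
P_l(x,y) = (1−x)(R_L − f(1−x) − g(y)) + (1−x−y)·g(y). -/
noncomputable def Pl (RL : ℝ) (f g : ℝ → ℝ) (x y : ℝ) : ℝ :=
  (1 - x) * (RL - f (1 - x) - g y) + (1 - x - y) * g y

/-- Information price as a function of market shares: P_a(x,y) = (1−x−y)·g(y). -/
noncomputable def Pa (g : ℝ → ℝ) (x y : ℝ) : ℝ := (1 - x - y) * g y

/-- Licensee's market-share payoff under the revenue-sharing scheme:
U_sl(x,y) = (P_l(x,y) − c_l)·x·(1−δ). -/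
noncomputable def Usl (RL : ℝ) (f g : ℝ → ℝ) (cl δ : ℝ) (x y : ℝ) : ℝ :=
  (Pl RL f g x y - cl) * x * (1 - δ)

/-- Database's market-share payoff under the revenue-sharing scheme:
U_db(x,y) = (P_a(x,y) − c_a)·y + (P_l(x,y) − c_l)·x·δ. -/
noncomputable def Udb (RL : ℝ) (f g : ℝ → ℝ) (ca cl δ : ℝ) (x y : ℝ) : ℝ :=
  (Pa g x y - ca) * y + (Pl RL f g x y - cl) * x * δ

/-- Licensee's market-share payoff under the wholesale-pricing scheme:
U_sl^{II}(x,y) = (P_l(x,y) − w − c_l)·x. -/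
noncomputable def UslII (RL : ℝ) (f g : ℝ → ℝ) (w cl : ℝ) (x y : ℝ) : ℝ :=
  (Pl RL f g x y - w - cl) * x

/-- Database's market-share payoff under the wholesale-pricing scheme:
U_db^{II}(x,y) = P_a(x,y)·y + w·x − c_a·y. -/
noncomputable def UdbII (g : ℝ → ℝ) (w ca : ℝ) (x y : ℝ) : ℝ :=
  Pa g x y * y + w * x - ca * y

/-- Proposition 3, licensee part: every maximizer of the licensee's
payoff over [0,1] is strictly less than 1/2. -/
theorem stmt9
    (RL : ℝ) (f g : ℝ → ℝ) (f' : ℝ → ℝ)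
    (hf' : ∀ t ∈ Set.Icc (0:ℝ) 1, HasDerivWithinAt f (f' t) (Set.Icc 0 1) t)
    (hf'_nonpos : ∀ t ∈ Set.Icc (0:ℝ) 1, f' t ≤ 0)
    (hRL : ∀ t ∈ Set.Icc (0:ℝ) 1, f t < RL)
    (cl δ : ℝ) (hcl : 0 < cl) (hδ : 0 ≤ δ) (hδ1 : δ < 1)
    (y : ℝ) (hy : y ∈ Set.Icc (0:ℝ) 1) (hgy : 0 ≤ g y)
    (xstar : ℝ) (hx : xstar ∈ Set.Icc (0:ℝ) 1)
    (hmax : ∀ x ∈ Set.Icc (0:ℝ) 1, Usl RL f g cl δ x y ≤ Usl RL f g cl δ xstar y) :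
    xstar < 1 / 2 := by
  by_contra hcon
  push_neg at hcon
  obtain ⟨hx0, hx1⟩ := hx
  have hδ' : (0:ℝ) < 1 - δ := by linarith
  have hU : ∀ x : ℝ, Usl RL f g cl δ x y
      = ((1-x)*(RL - f (1-x)) - y * g y - cl)*x*(1-δ) := by
    intro x; unfold Usl Pl; ring
  have hygy : 0 ≤ y * g y := mul_nonneg hy.1 hgy
  rcases eq_or_lt_of_le hcon with heq | hlt
  · -- xstar = 1/2 : derivative argument
    have hmem : (1/2:ℝ) ∈ Icc (0:ℝ) 1 := by constructor <;> norm_num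
    have hnhds : Icc (0:ℝ) 1 ∈ nhds (1/2:ℝ) := Icc_mem_nhds (by norm_num) (by norm_num)
    have hfd : HasDerivAt f (f' (1/2)) (1/2:ℝ) := (hf' _ hmem).hasDerivAt hnhds
    have h12 : (1:ℝ) - 1/2 = 1/2 := by norm_num
    have hinner : HasDerivAt (fun x : ℝ => 1 - x) (-1) (1/2:ℝ) := by
      simpa using (hasDerivAt_id (1/2:ℝ)).const_sub 1
    have hF : HasDerivAt (fun x : ℝ => f (1 - x)) (f' (1/2) * (-1)) (1/2:ℝ) := by
      have hfd' : HasDerivAt f (f' (1/2)) ((fun x : ℝ => 1 - x) (1/2:ℝ)) := by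
        show HasDerivAt f (f' (1/2)) ((1:ℝ) - 1/2)
        rw [h12]; exact hfd
      exact hfd'.comp (1/2:ℝ) hinner
    have h2 : HasDerivAt (fun x : ℝ => RL - f (1 - x)) (-(f' (1/2) * (-1))) (1/2:ℝ) :=
      hF.const_sub RL
    have h3 := hinner.mul h2
    have h4 := h3.sub_const (y * g y + cl)
    have h5 := h4.mul (hasDerivAt_id' (1/2:ℝ))
    have h6 := h5.mul_const (1 - δ)
    have hφ : HasDerivAt (fun x : ℝ => ((1-x)*(RL - f (1-x)) - y * g y - cl)*x*(1-δ))
        (((1/4)*f' (1/2) - (y * g y + cl))*(1-δ)) (1/2:ℝ) := by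
      convert h6 using 1
      · rfl
      · rfl
      · funext x; simp only [Pi.mul_apply]; ring
      · simp only [Pi.mul_apply]; ring
    have hlm : IsLocalMax (fun x : ℝ => ((1-x)*(RL - f (1-x)) - y * g y - cl)*x*(1-δ)) (1/2:ℝ) := by
      refine Filter.eventually_of_mem hnhds (fun x hxm => ?_)
      have := hmax x hxm
      rw [hU, hU] at this
      rw [← heq] at this
      exact this
    have hzero := hlm.hasDerivAt_eq_zero hφ
    have hfp := hf'_nonpos _ hmem
    nlinarith [mul_pos (show (0:ℝ) < y * g y + cl by linarith) hδ',
      mul_nonneg (show (0:ℝ) ≤ -(f' (1/2)) by linarith) (le_of_lt hδ')]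
  · -- xstar > 1/2 : symmetry argument
    have hfc : ContinuousOn f (Icc 0 1) := fun t ht => (hf' t ht).continuousWithinAt
    have hanti : AntitoneOn f (Icc (0:ℝ) 1) := by
      apply antitoneOn_of_deriv_nonpos (convex_Icc 0 1) hfc
      · intro t ht
        rw [interior_Icc] at ht
        exact ((hf' t (Ioo_subset_Icc_self ht)).hasDerivAt
          (Icc_mem_nhds ht.1 ht.2)).differentiableAt.differentiableWithinAt
      · intro t ht
        rw [interior_Icc] at ht
        have h1 : HasDerivAt f (f' t) t :=
          (hf' t (Ioo_subset_Icc_self ht)).hasDerivAt (Icc_mem_nhds ht.1 ht.2)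
        rw [h1.deriv]
        exact hf'_nonpos t (Ioo_subset_Icc_self ht)
    have hmem : (1 - xstar) ∈ Icc (0:ℝ) 1 := ⟨by linarith, by linarith⟩
    have hle := hmax (1 - xstar) hmem
    have hf_le : f xstar ≤ f (1 - xstar) := hanti hmem ⟨hx0, hx1⟩ (by linarith)
    rw [hU, hU] at hle
    have h1x : (1 : ℝ) - (1 - xstar) = xstar := by ring
    rw [h1x] at hle
    nlinarith [mul_nonneg (mul_nonneg (mul_nonneg hx0 (show (0:ℝ) ≤ 1 - xstar by linarith))
        (sub_nonneg.2 hf_le)) (le_of_lt hδ'),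
      mul_pos (mul_pos (show (0:ℝ) < 2*xstar - 1 by linarith) hcl) hδ',
      mul_nonneg (mul_nonneg (show (0:ℝ) ≤ 2*xstar - 1 by linarith) hygy) (le_of_lt hδ')]
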